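/- Let α, β > 0 and let (u,f) be a pair of real-valued functions on (0,∞), absolutely continuous on compact subintervals, with lim_{r→0} u(r) = 1, lim_{r→0} f(r) = 0, lim_{r→∞} u(r) = 0, lim_{r→∞} f(r) = 1. Then I(u,f) = ∫₀^∞ [2 u'² + (1−u²)²/r² + α r² f'² + αβ f² u²] dr ≥ min{√(2αβ), 2√α}. -/

import Mathlib

open MeasureTheory Filter Set Topology

noncomputable section

/-- `g` is absolutely continuous on every compact subinterval of `(0,∞)`,
with almost-everywhere derivative `g'`. -/
def LocAC (g g' : ℝ → ℝ) : Prop :=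
  ∀ a b : ℝ, 0 < a → a ≤ b →
    IntervalIntegrable g' volume a b ∧ g b - g a = ∫ t in a..b, g' t

/-- The integrand of the `γ = 0` energy functional
`I(u,f) = ∫₀^∞ [2 u'² + (1−u²)²/r² + α r² f'² + αβ f² u²] dr`. -/
def dmIntegrand0 (α β : ℝ) (u u' f f' : ℝ → ℝ) (r : ℝ) : ℝ :=
  2 * u' r ^ 2 + (1 - u r ^ 2) ^ 2 / r ^ 2
    + α * r ^ 2 * f' r ^ 2 + α * β * f r ^ 2 * u r ^ 2



/-- a.e.-bound and measurability of a primitive. -/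
lemma primitive_aesm {a b : ℝ} {ψ : ℝ → ℝ} (hψ : IntegrableOn ψ (Ioc a b)) :
    AEStronglyMeasurable (fun x => ∫ t in Ioc a x, ψ t) (volume.restrict (Ioc a b)) := by
  have h : ContinuousOn (fun x => ∫ t in Ioc a x, ψ t) (Icc a b) :=
    intervalIntegral.continuousOn_primitive ((integrableOn_Icc_iff_integrableOn_Ioc (f := ψ) (a := a) (b := b)).2 hψ)
  exact (h.mono Ioc_subset_Icc_self).aestronglyMeasurable measurableSet_Ioc

lemma primitive_bdd {a b : ℝ} {ψ : ℝ → ℝ} (hψ : IntegrableOn ψ (Ioc a b)) :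
    ∀ x ∈ Ioc a b, ‖∫ t in Ioc a x, ψ t‖ ≤ ∫ t in Ioc a b, ‖ψ t‖ := by
  intro x hx
  refine (norm_integral_le_integral_norm _).trans ?_
  refine setIntegral_mono_set hψ.norm ?_ ?_
  · exact Eventually.of_forall fun t => norm_nonneg _
  · exact HasSubset.Subset.eventuallyLE (Ioc_subset_Ioc_right hx.2)

/-- Symmetric Fubini identity on a triangle. -/
lemma fubini_sym {a b : ℝ} {φ ψ : ℝ → ℝ}
    (hφ : IntegrableOn φ (Ioc a b)) (hψ : IntegrableOn ψ (Ioc a b)) :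
    ∫ x in Ioc a b, ((φ x * ∫ t in Ioc a x, ψ t) + ψ x * ∫ t in Ioc a x, φ t)
      = (∫ x in Ioc a b, φ x) * (∫ x in Ioc a b, ψ x) := by
  set μ := volume.restrict (Ioc a b) with hμdef
  have hF : Integrable (fun p : ℝ × ℝ => φ p.1 * ψ p.2) (μ.prod μ) := hφ.mul_prod hψ
  set S : Set (ℝ × ℝ) := {p | p.2 ≤ p.1} with hSdef
  have hS : MeasurableSet S := measurableSet_le measurable_snd measurable_fst
  have hG : Integrable (S.indicator fun p : ℝ × ℝ => φ p.1 * ψ p.2) (μ.prod μ) := hF.indicator hS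
  have hH : Integrable (Sᶜ.indicator fun p : ℝ × ℝ => φ p.1 * ψ p.2) (μ.prod μ) :=
    hF.indicator hS.compl
  have hsplit : (∫ x in Ioc a b, φ x) * (∫ x in Ioc a b, ψ x)
      = (∫ p, (S.indicator fun p : ℝ × ℝ => φ p.1 * ψ p.2) p ∂(μ.prod μ))
        + ∫ p, (Sᶜ.indicator fun p : ℝ × ℝ => φ p.1 * ψ p.2) p ∂(μ.prod μ) := by
    rw [← integral_add hG hH, ← integral_prod_mul φ ψ]
    refine integral_congr_ae (Eventually.of_forall fun p => ?_)
    by_cases h : p ∈ S <;> simp [Set.indicator_apply, h]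
  have hGeq : (∫ p, (S.indicator fun p : ℝ × ℝ => φ p.1 * ψ p.2) p ∂(μ.prod μ))
      = ∫ x, (φ x * ∫ t in Ioc a x, ψ t) ∂μ := by
    rw [integral_prod _ hG]
    apply integral_congr_ae
    filter_upwards [ae_restrict_mem measurableSet_Ioc] with x hx
    have h1 : ∀ y, (S.indicator fun p : ℝ × ℝ => φ p.1 * ψ p.2) (x, y)
        = (Iic x).indicator (fun y => φ x * ψ y) y := by
      intro y; by_cases h : y ≤ x <;> simp [hSdef, Set.indicator_apply, h]
    simp_rw [h1]
    rw [integral_indicator measurableSet_Iic, hμdef,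
      Measure.restrict_restrict measurableSet_Iic]
    have h2 : Iic x ∩ Ioc a b = Ioc a x := by
      ext t
      constructor
      · rintro ⟨h1', h2', _⟩; exact ⟨h2', h1'⟩
      · rintro ⟨h1', h2'⟩; exact ⟨h2', h1', h2'.trans hx.2⟩
    rw [h2, integral_const_mul _ _]
  have hHeq : (∫ p, (Sᶜ.indicator fun p : ℝ × ℝ => φ p.1 * ψ p.2) p ∂(μ.prod μ))
      = ∫ y, (ψ y * ∫ t in Ioc a y, φ t) ∂μ := by
    rw [integral_prod_symm _ hH]
    apply integral_congr_ae
    filter_upwards [ae_restrict_mem measurableSet_Ioc] with y hy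
    have h1 : ∀ x, (Sᶜ.indicator fun p : ℝ × ℝ => φ p.1 * ψ p.2) (x, y)
        = (Iio y).indicator (fun x => φ x * ψ y) x := by
      intro x
      by_cases h : x < y
      · simp [hSdef, Set.indicator_apply, h, not_le.2 h]
      · simp [hSdef, Set.indicator_apply, h, not_lt.1 h]
    simp_rw [h1]
    rw [integral_indicator measurableSet_Iio, hμdef,
      Measure.restrict_restrict measurableSet_Iio]
    have h2 : Iio y ∩ Ioc a b = Ioo a y := by
      ext t
      constructor
      · rintro ⟨h1', h2', _⟩; exact ⟨h2', h1'⟩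
      · rintro ⟨h1', h2'⟩; exact ⟨h2', h1', h2'.le.trans hy.2⟩
    rw [h2, ← integral_Ioc_eq_integral_Ioo, integral_mul_const _ _, mul_comm]
  have hint1 : Integrable (fun x => φ x * ∫ t in Ioc a x, ψ t) μ := by
    have := hφ.bdd_mul (c := ∫ t in Ioc a b, ‖ψ t‖) (primitive_aesm hψ) ?_
    · exact this.congr (Eventually.of_forall fun x => mul_comm _ _)
    · filter_upwards [ae_restrict_mem measurableSet_Ioc] with x hx
      exact primitive_bdd hψ x hx
  have hint2 : Integrable (fun x => ψ x * ∫ t in Ioc a x, φ t) μ := by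
    have := hψ.bdd_mul (c := ∫ t in Ioc a b, ‖φ t‖) (primitive_aesm hφ) ?_
    · exact this.congr (Eventually.of_forall fun x => mul_comm _ _)
    · filter_upwards [ae_restrict_mem measurableSet_Ioc] with x hx
      exact primitive_bdd hφ x hx
  rw [hGeq, hHeq, ← integral_add hint1 hint2] at hsplit
  exact hsplit.symm

/-- Measurability and a.e. boundedness of a function with an AC representation. -/
lemma rep_aesm_bdd {a b : ℝ} {u u' : ℝ → ℝ} (hu' : IntegrableOn u' (Ioc a b))
    (hu : ∀ x ∈ Icc a b, u x - u a = ∫ t in Ioc a x, u' t) :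
    AEStronglyMeasurable u (volume.restrict (Ioc a b)) ∧
      ∀ᵐ x ∂(volume.restrict (Ioc a b)), ‖u x‖ ≤ ‖u a‖ + ∫ t in Ioc a b, ‖u' t‖ := by
  have heq : ∀ᵐ x ∂(volume.restrict (Ioc a b)),
      u x = u a + ∫ t in Ioc a x, u' t := by
    filter_upwards [ae_restrict_mem measurableSet_Ioc] with x hx
    have := hu x ⟨hx.1.le, hx.2⟩
    linarith
  constructor
  · refine AEStronglyMeasurable.congr ?_ (Filter.EventuallyEq.symm heq)
    exact aestronglyMeasurable_const.add (primitive_aesm hu')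
  · filter_upwards [heq, ae_restrict_mem measurableSet_Ioc] with x hx hx2
    rw [hx]
    calc ‖u a + ∫ t in Ioc a x, u' t‖ ≤ ‖u a‖ + ‖∫ t in Ioc a x, u' t‖ := norm_add_le _ _
    _ ≤ ‖u a‖ + ∫ t in Ioc a b, ‖u' t‖ := by
        have := primitive_bdd hu' x hx2; linarith

/-- Integration by parts / product rule for AC functions. -/
lemma prod_rule {a b : ℝ} (hab : a ≤ b) {u u' f f' : ℝ → ℝ}
    (hu' : IntegrableOn u' (Ioc a b)) (hf' : IntegrableOn f' (Ioc a b))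
    (hu : ∀ x ∈ Icc a b, u x - u a = ∫ t in Ioc a x, u' t)
    (hf : ∀ x ∈ Icc a b, f x - f a = ∫ t in Ioc a x, f' t) :
    u b * f b - u a * f a = ∫ x in Ioc a b, (u' x * f x + u x * f' x) := by
  set μ := volume.restrict (Ioc a b) with hμdef
  obtain ⟨humeas, hubdd⟩ := rep_aesm_bdd hu' hu
  obtain ⟨hfmeas, hfbdd⟩ := rep_aesm_bdd hf' hf
  -- integrabilities
  have h1 : Integrable (fun x => u' x * f x) μ := by
    have := hu'.bdd_mul (c := ‖f a‖ + ∫ t in Ioc a b, ‖f' t‖) hfmeas hfbdd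
    exact this.congr (Eventually.of_forall fun x => mul_comm _ _)
  have h2 : Integrable (fun x => u x * f' x) μ :=
    hf'.bdd_mul (c := ‖u a‖ + ∫ t in Ioc a b, ‖u' t‖) humeas hubdd
  have h3 : Integrable (fun x => u' x * ∫ t in Ioc a x, f' t) μ := by
    have := hu'.bdd_mul (c := ∫ t in Ioc a b, ‖f' t‖) (primitive_aesm hf') ?_
    · exact this.congr (Eventually.of_forall fun x => mul_comm _ _)
    · filter_upwards [ae_restrict_mem measurableSet_Ioc] with x hx
      exact primitive_bdd hf' x hx
  have h4 : Integrable (fun x => f' x * ∫ t in Ioc a x, u' t) μ := by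
    have := hf'.bdd_mul (c := ∫ t in Ioc a b, ‖u' t‖) (primitive_aesm hu') ?_
    · exact this.congr (Eventually.of_forall fun x => mul_comm _ _)
    · filter_upwards [ae_restrict_mem measurableSet_Ioc] with x hx
      exact primitive_bdd hu' x hx
  have h5 : Integrable (fun x => f a * u' x + u a * f' x) μ :=
    (hu'.const_mul _).add (hf'.const_mul _)
  have h6 : Integrable
      (fun x => (u' x * ∫ t in Ioc a x, f' t) + f' x * ∫ t in Ioc a x, u' t) μ := h3.add h4
  have key : ∫ x in Ioc a b, (u' x * f x + u x * f' x)
      = ∫ x in Ioc a b, ((f a * u' x + u a * f' x)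
          + ((u' x * ∫ t in Ioc a x, f' t) + f' x * ∫ t in Ioc a x, u' t)) := by
    refine integral_congr_ae ?_
    filter_upwards [ae_restrict_mem measurableSet_Ioc] with x hx
    have e1 : u x = u a + ∫ t in Ioc a x, u' t := by
      have := hu x ⟨hx.1.le, hx.2⟩; linarith
    have e2 : f x = f a + ∫ t in Ioc a x, f' t := by
      have := hf x ⟨hx.1.le, hx.2⟩; linarith
    rw [e1, e2]; ring
  rw [key, integral_add h5 h6, integral_add (hu'.const_mul _) (hf'.const_mul _),
    integral_const_mul _ _, integral_const_mul _ _, fubini_sym hu' hf']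
  have eu : ∫ t in Ioc a b, u' t = u b - u a := (hu b ⟨hab, le_rfl⟩).symm
  have ef : ∫ t in Ioc a b, f' t = f b - f a := (hf b ⟨hab, le_rfl⟩).symm
  rw [eu, ef]; ring

/-- for any admissible pair (energy possibly infinite, whence the
lower Lebesgue integral) the lower bound `I(u,f) ≥ min{√(2αβ), 2√α}` holds. -/
theorem energy_lower_bound (α β : ℝ) (hα : 0 < α) (hβ : 0 < β)
    (u u' f f' : ℝ → ℝ)
    (hu : LocAC u u') (hf : LocAC f f')
    (hu0 : Tendsto u (𝓝[>] (0 : ℝ)) (𝓝 1))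
    (hf0 : Tendsto f (𝓝[>] (0 : ℝ)) (𝓝 0))
    (huinf : Tendsto u atTop (𝓝 0))
    (hfinf : Tendsto f atTop (𝓝 1)) :
    ENNReal.ofReal (min (Real.sqrt (2 * α * β)) (2 * Real.sqrt α)) ≤
      ∫⁻ r in Ioi (0 : ℝ), ENNReal.ofReal (dmIntegrand0 α β u u' f f' r) := by
  set α' : ℝ := min α (α * β / 2) with hα'def
  have hα'pos : 0 < α' := lt_min hα (by positivity)
  set s : ℝ := Real.sqrt α' with hsdef
  have hs0 : 0 ≤ s := Real.sqrt_nonneg _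
  have hs2 : s ^ 2 = α' := Real.sq_sqrt hα'pos.le
  have hαs : s ^ 2 ≤ α := by rw [hs2]; exact min_le_left _ _
  have h2s : 2 * s ^ 2 ≤ α * β := by
    rw [hs2]; have := min_le_right α (α * β / 2); linarith
  -- rewrite the min
  have hmin : min (Real.sqrt (2 * α * β)) (2 * Real.sqrt α) = 2 * s := by
    have hmono : Monotone Real.sqrt := fun x y h => Real.sqrt_le_sqrt h
    have h4 : Real.sqrt (2 * α * β) = 2 * Real.sqrt (α * β / 2) := by
      rw [show 2 * α * β = 2 ^ 2 * (α * β / 2) by ring,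
        Real.sqrt_mul (by positivity), Real.sqrt_sq (by norm_num)]
    rw [h4, hsdef, hα'def, hmono.map_min]
    rcases le_total (Real.sqrt α) (Real.sqrt (α * β / 2)) with h | h
    · rw [min_eq_left h, min_eq_right (by linarith)]
    · rw [min_eq_right h, min_eq_left (by linarith)]
  rw [hmin]
  -- the key estimate for each compact interval
  have key : ∀ a b : ℝ, 0 < a → a ≤ b →
      ENNReal.ofReal (2 * s * (f b * (1 - u b ^ 2) - f a * (1 - u a ^ 2))) ≤
        ∫⁻ r in Ioi (0 : ℝ), ENNReal.ofReal (dmIntegrand0 α β u u' f f' r) := by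
    intro a b ha hab
    have hIu' : IntegrableOn u' (Ioc a b) :=
      (intervalIntegrable_iff_integrableOn_Ioc_of_le hab).1 (hu a b ha hab).1
    have hIf' : IntegrableOn f' (Ioc a b) :=
      (intervalIntegrable_iff_integrableOn_Ioc_of_le hab).1 (hf a b ha hab).1
    have hurep : ∀ x ∈ Icc a b, u x - u a = ∫ t in Ioc a x, u' t := by
      intro x hx
      have h := (hu a x ha hx.1).2
      rwa [intervalIntegral.integral_of_le hx.1] at h
    have hfrep : ∀ x ∈ Icc a b, f x - f a = ∫ t in Ioc a x, f' t := by
      intro x hx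
      have h := (hf a x ha hx.1).2
      rwa [intervalIntegral.integral_of_le hx.1] at h
    obtain ⟨humeas, hubdd⟩ := rep_aesm_bdd hIu' hurep
    obtain ⟨hfmeas, hfbdd⟩ := rep_aesm_bdd hIf' hfrep
    set v : ℝ → ℝ := fun x => 1 - u x ^ 2 with hvdef
    set v' : ℝ → ℝ := fun x => -(2 * u x * u' x) with hv'def
    have hIv' : IntegrableOn v' (Ioc a b) := by
      have h2u : Integrable (fun x => (2 * u x) * u' x) (volume.restrict (Ioc a b)) := by
        refine hIu'.bdd_mul (c := 2 * (‖u a‖ + ∫ t in Ioc a b, ‖u' t‖))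
          (humeas.const_mul 2) ?_
        filter_upwards [hubdd] with x hx
        have h2 : ‖2 * u x‖ = 2 * ‖u x‖ := by rw [norm_mul]; norm_num
        linarith
      exact h2u.neg.congr (Eventually.of_forall fun x => by simp [hv'def, mul_assoc])
    have husq : ∀ x ∈ Icc a b, u x ^ 2 - u a ^ 2 = ∫ t in Ioc a x, 2 * u t * u' t := by
      intro x hx
      have h := prod_rule hx.1 (hIu'.mono_set (Ioc_subset_Ioc_right hx.2))
        (hIu'.mono_set (Ioc_subset_Ioc_right hx.2))
        (fun y hy => hurep y ⟨hy.1, hy.2.trans hx.2⟩)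
        (fun y hy => hurep y ⟨hy.1, hy.2.trans hx.2⟩)
      have e : ∫ t in Ioc a x, (u' t * u t + u t * u' t) = ∫ t in Ioc a x, 2 * u t * u' t :=
        integral_congr_ae (Eventually.of_forall fun t => by ring)
      rw [e] at h
      rw [pow_two, pow_two]
      exact h
    have hvrep : ∀ x ∈ Icc a b, v x - v a = ∫ t in Ioc a x, v' t := by
      intro x hx
      have h := husq x hx
      have e : ∫ t in Ioc a x, v' t = -∫ t in Ioc a x, 2 * u t * u' t := by
        simp [hv'def, integral_neg]
      rw [e, ← h]
      simp [hvdef]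
    have hparts : f b * v b - f a * v a = ∫ x in Ioc a b, (f' x * v x + f x * v' x) :=
      prod_rule hab hIf' hIv' hfrep hvrep
    set G : ℝ → ℝ := fun x => 2 * s * (f' x * v x + f x * v' x) with hGdef
    have hv_meas : AEStronglyMeasurable v (volume.restrict (Ioc a b)) := by
      refine aestronglyMeasurable_const.sub ?_
      exact (humeas.mul humeas).congr
        (Eventually.of_forall fun x => (pow_two (u x)).symm)
    have hv_bdd : ∀ᵐ x ∂(volume.restrict (Ioc a b)),
        ‖v x‖ ≤ 1 + (‖u a‖ + ∫ t in Ioc a b, ‖u' t‖) ^ 2 := by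
      filter_upwards [hubdd] with x hx
      have hC : (0:ℝ) ≤ ‖u a‖ + ∫ t in Ioc a b, ‖u' t‖ := (norm_nonneg (u x)).trans hx
      have h3 : ‖u x‖ ^ 2 ≤ (‖u a‖ + ∫ t in Ioc a b, ‖u' t‖) ^ 2 :=
        pow_le_pow_left₀ (norm_nonneg _) hx 2
      rw [Real.norm_eq_abs] at h3 ⊢
      have h4 : |u x| ^ 2 = u x ^ 2 := sq_abs _
      refine abs_le.2 ⟨?_, ?_⟩ <;> simp only [hvdef] <;> nlinarith [sq_nonneg (u x)]
    have hIG : Integrable G (volume.restrict (Ioc a b)) := by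
      have ha1 : Integrable (fun x => f' x * v x) (volume.restrict (Ioc a b)) := by
        have := hIf'.bdd_mul (c := 1 + (‖u a‖ + ∫ t in Ioc a b, ‖u' t‖) ^ 2) hv_meas hv_bdd
        exact this.congr (Eventually.of_forall fun x => mul_comm _ _)
      have ha2 : Integrable (fun x => f x * v' x) (volume.restrict (Ioc a b)) :=
        hIv'.bdd_mul (c := ‖f a‖ + ∫ t in Ioc a b, ‖f' t‖) hfmeas hfbdd
      exact ((ha1.add ha2).const_mul (2 * s)).congr
        (Eventually.of_forall fun x => rfl)
    have hGint : ∫ x in Ioc a b, G x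
        = 2 * s * (f b * v b - f a * v a) := by
      rw [hGdef]
      rw [MeasureTheory.integral_const_mul _ _, ← hparts]
    -- pointwise bound
    have hpt : ∀ᵐ x ∂(volume.restrict (Ioc a b)),
        ENNReal.ofReal (G x) ≤ ENNReal.ofReal (dmIntegrand0 α β u u' f f' x) := by
      filter_upwards [ae_restrict_mem measurableSet_Ioc] with x hx
      refine ENNReal.ofReal_le_ofReal ?_
      have hx0 : (0:ℝ) < x := ha.trans hx.1
      set A : ℝ := (1 - u x ^ 2) / x with hAdef
      have hA : 1 - u x ^ 2 = A * x := (div_mul_cancel₀ _ hx0.ne').symm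
      have hQ : (1 - u x ^ 2) ^ 2 / x ^ 2 = A ^ 2 := by
        rw [hA, mul_pow, mul_div_assoc, div_self (pow_ne_zero 2 hx0.ne'), mul_one]
      rw [dmIntegrand0, hQ, hGdef]
      simp only [hvdef, hv'def]
      rw [hA]
      nlinarith [sq_nonneg (s * x * f' x - A), sq_nonneg (u' x + s * (f x * u x)),
        mul_nonneg (sub_nonneg.2 hαs) (sq_nonneg (x * f' x)),
        mul_nonneg (sub_nonneg.2 h2s) (sq_nonneg (f x * u x)), hs0, hx0.le]
    -- from real integral to lintegral
    have hGle : ENNReal.ofReal (∫ x in Ioc a b, G x) ≤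
        ∫⁻ x in Ioc a b, ENNReal.ofReal (G x) := by
      have hmax : Integrable (fun x => max (G x) 0) (volume.restrict (Ioc a b)) :=
        hIG.pos_part
      calc ENNReal.ofReal (∫ x in Ioc a b, G x)
          ≤ ENNReal.ofReal (∫ x in Ioc a b, max (G x) 0) :=
            ENNReal.ofReal_le_ofReal (integral_mono hIG hmax fun x => le_max_left _ _)
        _ = ∫⁻ x in Ioc a b, ENNReal.ofReal (max (G x) 0) :=
            ofReal_integral_eq_lintegral_ofReal hmax
              (Eventually.of_forall fun x => le_max_right _ _)
        _ = ∫⁻ x in Ioc a b, ENNReal.ofReal (G x) := by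
            refine lintegral_congr fun x => ?_
            rcases le_total (G x) 0 with h | h
            · rw [max_eq_right h, ENNReal.ofReal_of_nonpos h]; simp
            · rw [max_eq_left h]
    calc ENNReal.ofReal (2 * s * (f b * (1 - u b ^ 2) - f a * (1 - u a ^ 2)))
        = ENNReal.ofReal (∫ x in Ioc a b, G x) := by rw [hGint]
      _ ≤ ∫⁻ x in Ioc a b, ENNReal.ofReal (G x) := hGle
      _ ≤ ∫⁻ x in Ioc a b, ENNReal.ofReal (dmIntegrand0 α β u u' f f' x) :=
          lintegral_mono_ae hpt
      _ ≤ ∫⁻ r in Ioi (0 : ℝ), ENNReal.ofReal (dmIntegrand0 α β u u' f f' r) := by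
          refine lintegral_mono' (Measure.restrict_mono ?_ le_rfl) le_rfl
          exact fun x hx => ha.trans hx.1
  -- limits
  refine ENNReal.le_of_forall_pos_le_add fun ε hε hLtop => ?_
  set δ : ℝ := (ε : ℝ) / (2 * s + 1) with hδdef
  have hεpos : (0:ℝ) < ε := hε
  have hδpos : 0 < δ := by positivity
  have hg0 : Tendsto (fun r => f r * (1 - u r ^ 2)) (𝓝[>] (0:ℝ)) (𝓝 0) := by
    have h := hf0.mul (((tendsto_const_nhds : Tendsto (fun _ : ℝ => (1:ℝ)) (𝓝[>] (0:ℝ)) (𝓝 1))).sub (hu0.pow 2))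
    norm_num at h
    exact h
  have hginf : Tendsto (fun r => f r * (1 - u r ^ 2)) atTop (𝓝 1) := by
    have h := hfinf.mul (((tendsto_const_nhds : Tendsto (fun _ : ℝ => (1:ℝ)) atTop (𝓝 1))).sub (huinf.pow 2))
    norm_num at h
    exact h
  obtain ⟨a, hga, ha⟩ : ∃ a, |f a * (1 - u a ^ 2)| < δ / 2 ∧ 0 < a := by
    have h1 : ∀ᶠ x in 𝓝[>] (0:ℝ), |f x * (1 - u x ^ 2)| < δ / 2 := by
      have := Metric.tendsto_nhds.1 hg0 (δ / 2) (by positivity)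
      simpa [Real.dist_eq, abs_mul] using this
    exact (h1.and self_mem_nhdsWithin).exists
  obtain ⟨b, hb1, hb2⟩ : ∃ b, a ≤ b ∧ 1 - δ / 2 < f b * (1 - u b ^ 2) :=
    ((eventually_ge_atTop a).and
      (hginf.eventually (eventually_gt_nhds (by linarith)))).exists
  have hgab : 1 - δ ≤ f b * (1 - u b ^ 2) - f a * (1 - u a ^ 2) := by
    have h := abs_lt.1 hga
    linarith [h.1, h.2]
  calc ENNReal.ofReal (2 * s)
      ≤ ENNReal.ofReal (2 * s * (f b * (1 - u b ^ 2) - f a * (1 - u a ^ 2)) + 2 * s * δ) := by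
        refine ENNReal.ofReal_le_ofReal ?_
        nlinarith [hs0]
    _ ≤ ENNReal.ofReal (2 * s * (f b * (1 - u b ^ 2) - f a * (1 - u a ^ 2)))
          + ENNReal.ofReal (2 * s * δ) := ENNReal.ofReal_add_le
    _ ≤ (∫⁻ r in Ioi (0 : ℝ), ENNReal.ofReal (dmIntegrand0 α β u u' f f' r)) + ↑ε := by
        refine add_le_add (key a b ha hb1) ?_
        have hr : 2 * s * δ ≤ (ε : ℝ) := by
          rw [hδdef]
          rw [show 2 * s * ((ε:ℝ) / (2 * s + 1)) = (2 * s * (ε:ℝ)) / (2 * s + 1) by ring]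
          rw [div_le_iff₀ (by positivity)]
          have hq : (ε:ℝ) * (2 * s + 1) - 2 * s * (ε:ℝ) = (ε:ℝ) := by ring
          linarith
        calc ENNReal.ofReal (2 * s * δ) ≤ ENNReal.ofReal (ε : ℝ) :=
              ENNReal.ofReal_le_ofReal hr
          _ = ↑ε := ENNReal.ofReal_coe_nnreal
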